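/- Fix p ∈ (0,1/2], let K be a p-core CRG with optimizer μ (full support, white-vertex masses μ(u) = g_K(p)/p and black-vertex gray-degree identity d_G(u) = (p−g_K(p))/p + ((1−2p)/p)μ(u)). For each n, let G_n = K[μ,n] be the blow-up where vertex x is replaced by ⌊μ(x)·n⌋ vertices. Then lim_{n→∞} Δ_p(G_n)/|G_n| = g_K(p), where for a colored graph G, d_p(v) = Σ_u w_p(uv) with w_p = p on white edges, 1−p on black edges, 0 on gray edges, and Δ_p(G) = max_v d_p(v). -/

import Mathlib

open Finset

inductive EColor | white | black | gray
deriving DecidableEq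

/-- The `p`-weight of an edge color: `p` for white, `1-p` for black, `0` for gray. -/
def wval (p : ℝ) : EColor → ℝ
  | .white => p
  | .black => 1 - p
  | .gray => 0

/-- The matrix `M_K(p)` of a CRG given by vertex colors `vb` (`true` = black)
and edge colors `ec`. -/
def Mmat {V : Type*} [DecidableEq V] (vb : V → Bool) (ec : V → V → EColor) (p : ℝ)
    (x y : V) : ℝ :=
  if x = y then (if vb x then 1 - p else p) else wval p (ec x y)

/-- `μ` is a probability mass. -/
def IsProb {V : Type*} [Fintype V] (μ : V → ℝ) : Prop :=
  (∀ x, 0 ≤ μ x) ∧ ∑ x, μ x = 1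

/-- The quadratic form `⟨μ, M_K(p) μ⟩`. -/
def QF {V : Type*} [Fintype V] [DecidableEq V] (vb : V → Bool) (ec : V → V → EColor)
    (p : ℝ) (μ : V → ℝ) : ℝ :=
  ∑ x, ∑ y, μ x * Mmat vb ec p x y * μ y

/-- `g` is the minimum of the quadratic form over probability masses, i.e. `g = g_K(p)`. -/
def gIs {V : Type*} [Fintype V] [DecidableEq V] (vb : V → Bool) (ec : V → V → EColor)
    (p g : ℝ) : Prop :=
  IsLeast {t | ∃ μ : V → ℝ, IsProb μ ∧ t = QF vb ec p μ} g

/-- The weighted gray-degree `d_G(u) = ∑_{v : uv gray} μ(v)`. -/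
def grayDeg {V : Type*} [Fintype V] [DecidableEq V] (ec : V → V → EColor) (μ : V → ℝ)
    (u : V) : ℝ :=
  ∑ v ∈ Finset.univ.filter (fun v => v ≠ u ∧ ec u v = EColor.gray), μ v

/-- The blow-up `K[μ,n]` of a CRG, where vertex `x` is replaced by `⌊μ(x)·n⌋` vertices. -/
def sblow {V : Type*} [DecidableEq V] (vb : V → Bool) (ec : V → V → EColor) (μ : V → ℝ)
    (n : ℕ) : ((x : V) × Fin ⌊μ x * (n : ℝ)⌋₊) → ((x : V) × Fin ⌊μ x * (n : ℝ)⌋₊) → EColor :=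
  fun a b => if a.1 = b.1 then (if vb a.1 then EColor.black else EColor.white)
    else ec a.1 b.1

/-- The `p`-degree of a vertex of a colored graph. -/
def dP {A : Type*} [Fintype A] [DecidableEq A] (p : ℝ) (col : A → A → EColor) (v : A) : ℝ :=
  ∑ u ∈ Finset.univ.filter (fun u => u ≠ v), wval p (col v u)

/-- The maximum `p`-degree of a colored graph. -/
noncomputable def maxDP {A : Type*} [Fintype A] [DecidableEq A] (p : ℝ)
    (col : A → A → EColor) : ℝ :=
  sSup (Set.range (dP p col))

/-- for `p ∈ (0,1/2]` and a `p`-core CRG `K` with optimizer `μ`,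
`Δ_p(K[μ,n])/|K[μ,n]| → g_K(p)` as `n → ∞`. -/
theorem stmt13 {V : Type*} [Fintype V] [DecidableEq V]
    (vb : V → Bool) (ec : V → V → EColor) (p g : ℝ) (hp0 : 0 < p) (hp2 : p ≤ 1 / 2)
    (hsymm : ∀ a b, ec a b = ec b a)
    (hnb : ∀ x y, x ≠ y → ec x y ≠ EColor.black)
    (hwe : ∀ x y, x ≠ y → ec x y = EColor.white → vb x = true ∧ vb y = true)
    (μ : V → ℝ) (hμ : IsProb μ) (hfull : ∀ x, 0 < μ x)
    (hg : gIs vb ec p g) (hμg : QF vb ec p μ = g)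
    (hwhite : ∀ u, vb u = false → μ u = g / p)
    (hblack : ∀ u, vb u = true →
      grayDeg ec μ u = (p - g) / p + ((1 - 2 * p) / p) * μ u) :
    Filter.Tendsto
      (fun n : ℕ => maxDP p (sblow vb ec μ n) / ∑ x : V, (⌊μ x * (n : ℝ)⌋₊ : ℝ))
      Filter.atTop (nhds g) := by
  have hp1 : p ≤ 1 := hp2.trans (by norm_num)
  -- basic facts about Mmat
  have hM0 : ∀ x y, 0 ≤ Mmat vb ec p x y := by
    intro x y
    unfold Mmat
    split_ifs with h h'
    · linarith
    · linarith
    · cases hec : ec x y <;> simp [wval] <;> linarith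
  have hM1 : ∀ x y, Mmat vb ec p x y ≤ 1 := by
    intro x y
    unfold Mmat
    split_ifs with h h'
    · linarith
    · linarith
    · cases hec : ec x y <;> simp [wval] <;> linarith
  -- row sums of M against μ are all equal to g
  have hrow : ∀ x, ∑ y, Mmat vb ec p x y * μ y = g := by
    intro x
    rw [← Finset.add_sum_erase _ _ (Finset.mem_univ x)]
    have hdiag : Mmat vb ec p x x = if vb x then 1 - p else p := by simp [Mmat]
    by_cases hb : vb x
    · -- black vertex
      have hterm : ∀ y ∈ Finset.univ.erase x, Mmat vb ec p x y * μ y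
          = p * μ y - p * (if ec x y = EColor.gray then μ y else 0) := by
        intro y hy
        have hxy : x ≠ y := (Finset.ne_of_mem_erase hy).symm
        have hnotb := hnb x y hxy
        cases hec : ec x y with
        | black => exact absurd hec hnotb
        | white => simp [Mmat, hxy, hec, wval]
        | gray => simp [Mmat, hxy, hec, wval]
      rw [Finset.sum_congr rfl hterm, Finset.sum_sub_distrib]
      have hsum_erase : ∑ y ∈ Finset.univ.erase x, μ y = 1 - μ x := by
        have h2 := hμ.2
        rw [← Finset.add_sum_erase _ _ (Finset.mem_univ x)] at h2
        linarith
      have hgray : ∑ y ∈ Finset.univ.erase x, (if ec x y = EColor.gray then μ y else 0)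
          = grayDeg ec μ x := by
        have hset : Finset.univ.filter (fun v => v ≠ x ∧ ec x v = EColor.gray)
            = (Finset.univ.erase x).filter (fun v => ec x v = EColor.gray) := by
          ext y
          simp [Finset.mem_erase, and_comm]
        rw [grayDeg, hset, Finset.sum_filter]
      rw [← Finset.mul_sum, ← Finset.mul_sum, hsum_erase, hgray, hdiag, hblack x hb, if_pos hb]
      field_simp
      ring
    · -- white vertex
      have hterm : ∀ y ∈ Finset.univ.erase x, Mmat vb ec p x y * μ y = 0 := by
        intro y hy
        have hxy : x ≠ y := (Finset.ne_of_mem_erase hy).symm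
        have h1 := hnb x y hxy
        have h2 : ec x y ≠ EColor.white := by
          intro hw
          have := (hwe x y hxy hw).1
          simp [this] at hb
        have h3 : ec x y = EColor.gray := by
          cases hec : ec x y
          · exact absurd hec h2
          · exact absurd hec h1
          · rfl
        simp [Mmat, hxy, h3, wval]
      rw [Finset.sum_eq_zero hterm, hdiag, if_neg hb]
      have hbx : vb x = false := by simpa using hb
      rw [hwhite x hbx]
      field_simp
      simp
  -- g is nonnegative
  have hg0 : 0 ≤ g := by
    rw [← hμg, QF]
    apply Finset.sum_nonneg
    intro x _
    apply Finset.sum_nonneg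
    intro y _
    have := hM0 x y
    have h1 := (hμ.1 x)
    have h2 := (hμ.1 y)
    positivity
  -- formula for the p-degree in the blow-up
  have hdP : ∀ (n : ℕ) (v : (x : V) × Fin ⌊μ x * (n : ℝ)⌋₊),
      dP p (sblow vb ec μ n) v
        = (∑ y, (⌊μ y * (n : ℝ)⌋₊ : ℝ) * Mmat vb ec p v.1 y) - Mmat vb ec p v.1 v.1 := by
    intro n v
    have hw : ∀ u : (x : V) × Fin ⌊μ x * (n : ℝ)⌋₊,
        wval p (sblow vb ec μ n v u) = Mmat vb ec p v.1 u.1 := by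
      intro u
      by_cases h : v.1 = u.1
      · cases hb : vb u.1 <;> simp [sblow, Mmat, h, hb, wval]
      · simp [sblow, Mmat, h]
    rw [dP, Finset.filter_ne', Finset.sum_congr rfl (fun u _ => hw u),
      Finset.sum_erase_eq_sub (Finset.mem_univ v)]
    congr 1
    rw [← Finset.univ_sigma_univ, Finset.sum_sigma]
    refine Finset.sum_congr rfl (fun y _ => ?_)
    simp [Finset.sum_const, mul_comm]
  -- bounds on the weighted row sums
  have hfloor_le : ∀ (n : ℕ) (y : V), ((⌊μ y * (n : ℝ)⌋₊ : ℝ)) ≤ μ y * n := by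
    intro n y
    exact Nat.floor_le (mul_nonneg (hfull y).le (Nat.cast_nonneg n))
  have hfloor_ge : ∀ (n : ℕ) (y : V), μ y * n - 1 ≤ ((⌊μ y * (n : ℝ)⌋₊ : ℝ)) := by
    intro n y
    have := Nat.lt_floor_add_one (μ y * n)
    linarith
  have hrown : ∀ (n : ℕ) (x : V), ∑ y, (μ y * (n : ℝ)) * Mmat vb ec p x y = g * n := by
    intro n x
    have h2 : ∑ y, μ y * (n : ℝ) * Mmat vb ec p x y
        = (∑ y, Mmat vb ec p x y * μ y) * n := by
      rw [Finset.sum_mul]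
      exact Finset.sum_congr rfl fun y _ => by ring
    rw [h2, hrow x]
  have hup : ∀ (n : ℕ) (x : V),
      ∑ y, (⌊μ y * (n : ℝ)⌋₊ : ℝ) * Mmat vb ec p x y ≤ g * n := by
    intro n x
    rw [← hrown n x]
    apply Finset.sum_le_sum
    intro y _
    exact mul_le_mul_of_nonneg_right (hfloor_le n y) (hM0 x y)
  have hlo : ∀ (n : ℕ) (x : V),
      g * n - Fintype.card V ≤ ∑ y, (⌊μ y * (n : ℝ)⌋₊ : ℝ) * Mmat vb ec p x y := by
    intro n x
    have h1 : ∑ y, (μ y * (n : ℝ) - 1) * Mmat vb ec p x y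
        ≤ ∑ y, (⌊μ y * (n : ℝ)⌋₊ : ℝ) * Mmat vb ec p x y :=
      Finset.sum_le_sum fun y _ => mul_le_mul_of_nonneg_right (hfloor_ge n y) (hM0 x y)
    have h2 : ∑ y, (μ y * (n : ℝ) - 1) * Mmat vb ec p x y
        = g * n - ∑ y, Mmat vb ec p x y := by
      have := hrown n x
      simp_rw [sub_mul, one_mul]
      rw [Finset.sum_sub_distrib, this]
    have h3 : ∑ y, Mmat vb ec p x y ≤ (Fintype.card V : ℝ) := by
      calc ∑ y, Mmat vb ec p x y ≤ ∑ _y : V, (1 : ℝ) :=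
            Finset.sum_le_sum fun y _ => hM1 x y
        _ = Fintype.card V := by simp
    linarith
  -- bounds on dP
  have hdPub : ∀ (n : ℕ) (v : (x : V) × Fin ⌊μ x * (n : ℝ)⌋₊),
      dP p (sblow vb ec μ n) v ≤ g * n := by
    intro n v
    rw [hdP n v]
    have := hM0 v.1 v.1
    have := hup n v.1
    linarith
  have hdPlb : ∀ (n : ℕ) (v : (x : V) × Fin ⌊μ x * (n : ℝ)⌋₊),
      g * n - (Fintype.card V + 1) ≤ dP p (sblow vb ec μ n) v := by
    intro n v
    rw [hdP n v]
    have := hM1 v.1 v.1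
    have := hlo n v.1
    linarith
  -- V is nonempty
  have hVne : Nonempty V := by
    by_contra h
    rw [not_nonempty_iff] at h
    have := hμ.2
    rw [Finset.univ_eq_empty, Finset.sum_empty] at this
    norm_num at this
  have hcard1 : (1 : ℝ) ≤ Fintype.card V := by
    have : 0 < Fintype.card V := Fintype.card_pos
    exact_mod_cast this
  -- bounds on S n
  have hSub : ∀ n : ℕ, ∑ x : V, (⌊μ x * (n : ℝ)⌋₊ : ℝ) ≤ n := by
    intro n
    calc ∑ x : V, (⌊μ x * (n : ℝ)⌋₊ : ℝ) ≤ ∑ x : V, μ x * n :=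
          Finset.sum_le_sum fun x _ => hfloor_le n x
      _ = (∑ x : V, μ x) * n := by rw [Finset.sum_mul]
      _ = n := by rw [hμ.2, one_mul]
  have hSlb : ∀ n : ℕ, (n : ℝ) - Fintype.card V ≤ ∑ x : V, (⌊μ x * (n : ℝ)⌋₊ : ℝ) := by
    intro n
    have h1 : ∑ x : V, (μ x * (n : ℝ) - 1) ≤ ∑ x : V, (⌊μ x * (n : ℝ)⌋₊ : ℝ) :=
      Finset.sum_le_sum fun x _ => hfloor_ge n x
    have h2 : ∑ x : V, (μ x * (n : ℝ) - 1) = (n : ℝ) - Fintype.card V := by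
      rw [Finset.sum_sub_distrib, ← Finset.sum_mul, hμ.2, one_mul]
      simp [Finset.card_univ]
    linarith
  -- main estimate
  rw [← tendsto_sub_nhds_zero_iff]
  set K : ℝ := (Fintype.card V + 1) + g * Fintype.card V with hK
  have hK0 : 0 ≤ K := by
    have : (0:ℝ) ≤ g * Fintype.card V := by positivity
    have : (0:ℝ) ≤ (Fintype.card V : ℝ) := by positivity
    simp only [hK]
    positivity
  apply squeeze_zero_norm' (a := fun n : ℕ => 2 * K / n)
  · -- eventual bound
    have hev1 : ∀ᶠ n : ℕ in Filter.atTop, ∀ x : V, (1 : ℝ) ≤ μ x * n := by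
      rw [Filter.eventually_all]
      intro x
      have ht : Filter.Tendsto (fun n : ℕ => μ x * n) Filter.atTop Filter.atTop :=
        Filter.Tendsto.const_mul_atTop (hfull x) tendsto_natCast_atTop_atTop
      exact ht.eventually_ge_atTop 1
    have hev2 : ∀ᶠ n : ℕ in Filter.atTop, 2 * Fintype.card V ≤ n :=
      Filter.eventually_ge_atTop _
    filter_upwards [hev1, hev2] with n h1 h2
    -- the blow-up is nonempty
    have hfl : ∀ x : V, 1 ≤ ⌊μ x * (n : ℝ)⌋₊ := by
      intro x
      exact Nat.le_floor (by exact_mod_cast h1 x)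
    have hne : Nonempty ((x : V) × Fin ⌊μ x * (n : ℝ)⌋₊) := by
      obtain ⟨x⟩ := hVne
      exact ⟨⟨x, ⟨0, hfl x⟩⟩⟩
    set S : ℝ := ∑ x : V, (⌊μ x * (n : ℝ)⌋₊ : ℝ) with hSdef
    have hn2 : (2 * Fintype.card V : ℝ) ≤ n := by exact_mod_cast h2
    have hShalf : (n : ℝ) / 2 ≤ S := by
      have := hSlb n
      simp only [← hSdef] at this
      linarith
    have hnpos : (0 : ℝ) < n := by linarith
    have hSpos : (0 : ℝ) < S := by linarith
    -- bounds on maxDP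
    have hmub : maxDP p (sblow vb ec μ n) ≤ g * n := by
      apply Real.sSup_le
      · rintro t ⟨v, rfl⟩
        exact hdPub n v
      · positivity
    have hmlb : g * n - (Fintype.card V + 1) ≤ maxDP p (sblow vb ec μ n) := by
      obtain ⟨v⟩ := hne
      calc g * n - (Fintype.card V + 1) ≤ dP p (sblow vb ec μ n) v := hdPlb n v
        _ ≤ maxDP p (sblow vb ec μ n) := by
            apply le_csSup
            · exact ⟨g * n, by rintro t ⟨u, rfl⟩; exact hdPub n u⟩
            · exact ⟨v, rfl⟩
    -- |maxDP - g * S| ≤ K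
    have hSn : S ≤ (n : ℝ) := hSub n
    have hSlb' : (n : ℝ) - Fintype.card V ≤ S := hSlb n
    have hgS : g * S ≤ g * n := mul_le_mul_of_nonneg_left hSn hg0
    have hgNS : g * ((n : ℝ) - S) ≤ g * Fintype.card V :=
      mul_le_mul_of_nonneg_left (by linarith) hg0
    have hgc0 : (0 : ℝ) ≤ g * Fintype.card V := by positivity
    have hkey : |maxDP p (sblow vb ec μ n) - g * S| ≤ K := by
      rw [abs_le]
      constructor
      · simp only [hK]; nlinarith [hmlb]
      · simp only [hK]; nlinarith [hmub]
    have heq : maxDP p (sblow vb ec μ n) / S - g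
        = (maxDP p (sblow vb ec μ n) - g * S) / S := by
      field_simp
    rw [Real.norm_eq_abs, heq, abs_div, abs_of_pos hSpos]
    calc |maxDP p (sblow vb ec μ n) - g * S| / S ≤ K / S := by gcongr
      _ ≤ K / ((n : ℝ) / 2) := by gcongr
      _ = 2 * K / n := by
          rw [div_div_eq_mul_div]
          ring
  · exact tendsto_const_div_atTop_nhds_zero_nat (2 * K)
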